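/- Under the hypotheses of the dynamical system (b43) (equations for B, B_S, B_N, G, G_S, G_N, G_R with parameters m, f, ε₂), the quantity M = 2(B_N G_S - B_S G_N) - B(G_R + f/2) satisfies M' + (m+1)·G·M = 0. -/

import Mathlib

/-- under the full dynamical system (b43),
M = 2(B_N G_S - B_S G_N) - B(G_R + f/2) satisfies M' + (m+1)·G·M = 0. -/
theorem stmt3 (m f : ℝ) (hm : m ≠ 1) (B B_S B_N G G_S G_N G_R ε₂ : ℝ → ℝ)
    (hε₂ : Differentiable ℝ ε₂)
    (hB : ∀ t, HasDerivAt B (-(m * B t * G t + 4 * (B_N t * G_N t + B_S t * G_S t))) t)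
    (hBS : ∀ t, HasDerivAt B_S (-(m * B_S t * G t + B t * G_S t - 2 * B_N t * G_R t)) t)
    (hBN : ∀ t, HasDerivAt B_N (-(m * B_N t * G t + B t * G_N t + 2 * B_S t * G_R t)) t)
    (hG : ∀ t, HasDerivAt G (-((G t) ^ 2 / 2 + 2 * ((G_N t) ^ 2 + (G_S t) ^ 2 - (G_R t) ^ 2)
      - 2 * f * G_R t + 2 * (ε₂ t * m / (m - 1)) * B t)) t)
    (hGN : ∀ t, HasDerivAt G_N (-(G t * G_N t - f * G_S t
      + 2 * (ε₂ t * m / (m - 1)) * B_N t)) t)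
    (hGS : ∀ t, HasDerivAt G_S (-(G t * G_S t + f * G_N t
      + 2 * (ε₂ t * m / (m - 1)) * B_S t)) t)
    (hGR : ∀ t, HasDerivAt G_R (-(G t * G_R t + (f / 2) * G t)) t) :
    ∀ t, HasDerivAt
      (fun s => 2 * (B_N s * G_S s - B_S s * G_N s) - B s * (G_R s + f / 2))
      (-((m + 1) * G t *
        (2 * (B_N t * G_S t - B_S t * G_N t) - B t * (G_R t + f / 2)))) t := by
  intro t
  have h := (((hBN t).mul (hGS t)).sub ((hBS t).mul (hGN t))).const_mul 2
    |>.sub ((hB t).mul ((hGR t).add_const (f/2)))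
  exact h.congr_deriv (by ring)
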